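/- (Lemma 4.1, spanning part.) At every point (x,ξ) ∈ T𝕊^{n−1}: (i) ξ^i X_i(x,ξ) = 0 and ξ^i Ξ_i(x,ξ) = 0; (ii) the 2n vectors X_i(x,ξ), Ξ_i(x,ξ) (1 ≤ i ≤ n) span the tangent space T_{(x,ξ)}(T𝕊^{n−1}); and (iii) every linear relation α^i X_i(x,ξ) + β^i Ξ_i(x,ξ) = 0 has α^i = α₀ ξ^i and β^i = β₀ ξ^i for some scalars α₀, β₀, i.e. every linear dependence among these vectors is a consequence of (i). -/

import Mathlib

open MeasureTheory Real
open scoped InnerProductSpace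

noncomputable section

abbrev E (n : ℕ) : Type := EuclideanSpace ℝ (Fin n)

/-- The pairing `⟨f(z), ξ^m⟩ = f_{i₁…i_m}(z) ξ^{i₁}⋯ξ^{i_m}`. -/
def tpair {n m : ℕ} (f : (Fin m → Fin n) → E n → ℂ) (z ξ : E n) : ℂ :=
  ∑ i : Fin m → Fin n, f i z * ∏ j, ((ξ (i j) : ℝ) : ℂ)

/-- The momentum ray transform `(Jᵏf)(x,ξ) = ∫ tᵏ ⟨f(x+tξ), ξᵐ⟩ dt`. -/
def Jmrt {n m : ℕ} (k : ℕ) (f : (Fin m → Fin n) → E n → ℂ) (x ξ : E n) : ℂ :=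
  ∫ t : ℝ, (t : ℂ) ^ k * tpair f (x + t • ξ) ξ

/-- `f` is a Schwartz tensor field: each component is a Schwartz function. -/
def IsSchwartzTF {n m : ℕ} (f : (Fin m → Fin n) → E n → ℂ) : Prop :=
  ∀ i, ∃ g : SchwartzMap (E n) ℂ, ∀ z, g z = f i z

/-- `f` is a symmetric tensor field. -/
def IsSymTF {n m : ℕ} (f : (Fin m → Fin n) → E n → ℂ) : Prop :=
  ∀ (i : Fin m → Fin n) (σ : Equiv.Perm (Fin m)), f (i ∘ σ) = f i

/-- The tangent vector to `T𝕊^{n-1}` at `(x,ξ)` representing `X_i`: `(e_i − ξ_i ξ, 0)`. -/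
def Xvec {n : ℕ} (i : Fin n) (x ξ : E n) : E n × E n :=
  ((EuclideanSpace.single i 1 : E n) - ξ i • ξ, (0 : E n))

/-- The tangent vector to `T𝕊^{n-1}` at `(x,ξ)` representing `Ξ_i`: `(−x_i ξ, e_i − ξ_i ξ)`. -/
def Ξvec {n : ℕ} (i : Fin n) (x ξ : E n) : E n × E n :=
  (-(x i) • ξ, (EuclideanSpace.single i 1 : E n) - ξ i • ξ)

lemma sum_comb_apply {n : ℕ} (c d ξ : E n) (j : Fin n) :
    (∑ i, c i • ((EuclideanSpace.single i (1:ℝ) : E n) - d i • ξ)) j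
      = c j - (∑ i, c i * d i) * ξ j := by
  rw [WithLp.ofLp_sum, Finset.sum_apply j Finset.univ _]
  simp only [PiLp.smul_apply, PiLp.sub_apply, EuclideanSpace.single_apply,
    smul_eq_mul, mul_sub, Finset.sum_sub_distrib, Finset.sum_mul]
  congr 1
  · simp
  · exact Finset.sum_congr rfl fun i _ => by ring

lemma sum_smul_apply {n : ℕ} (c ξ : E n) (r : Fin n → ℝ) (j : Fin n) :
    (∑ i, c i • (r i • ξ)) j = (∑ i, c i * r i) * ξ j := by
  rw [WithLp.ofLp_sum, Finset.sum_apply j Finset.univ _]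
  simp only [PiLp.smul_apply, smul_eq_mul, Finset.sum_mul]
  exact Finset.sum_congr rfl fun i _ => by ring

lemma inner_eq_sum {n : ℕ} (a b : E n) : ⟪a, b⟫_ℝ = ∑ i, a i * b i := by
  simp [PiLp.inner_apply]
  exact Finset.sum_congr rfl fun i _ => mul_comm _ _

lemma X_fst {n : ℕ} (c : E n) (x ξ : E n) (j : Fin n) :
    (∑ i, c i • Xvec i x ξ).1 j = c j - (∑ i, c i * ξ i) * ξ j := by
  rw [Prod.fst_sum]
  simp only [Xvec, smul_zero, Prod.smul_mk]
  exact sum_comb_apply c ξ ξ j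

lemma X_snd {n : ℕ} (c : E n) (x ξ : E n) :
    (∑ i, c i • Xvec i x ξ).2 = 0 := by
  rw [Prod.snd_sum]
  simp [Xvec]

lemma Ξ_fst {n : ℕ} (c : E n) (x ξ : E n) (j : Fin n) :
    (∑ i, c i • Ξvec i x ξ).1 j = -(∑ i, c i * x i) * ξ j := by
  rw [Prod.fst_sum]
  simp only [Ξvec, Prod.smul_mk]
  have : ∀ i : Fin n, c i • (-(x i) • ξ) = c i • ((fun k => -(x k)) i • ξ) := fun i => rfl
  rw [Finset.sum_congr rfl fun i _ => this i, sum_smul_apply c ξ (fun k => -(x k)) j]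
  have h' : ∑ i, c i * -(x i) = -∑ i, c i * x i := by simp [mul_neg]
  rw [h', neg_mul]

lemma Ξ_snd {n : ℕ} (c : E n) (x ξ : E n) (j : Fin n) :
    (∑ i, c i • Ξvec i x ξ).2 j = c j - (∑ i, c i * ξ i) * ξ j := by
  rw [Prod.snd_sum]
  simp only [Ξvec, Prod.smul_mk]
  exact sum_comb_apply c ξ ξ j

/-- The target submodule. -/
def Wsub {n : ℕ} (x ξ : E n) : Submodule ℝ (E n × E n) where
  carrier := {p : E n × E n | ⟪ξ, p.2⟫_ℝ = 0 ∧ ⟪ξ, p.1⟫_ℝ + ⟪x, p.2⟫_ℝ = 0}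
  zero_mem' := by simp
  add_mem' := by
    rintro a b ⟨ha1, ha2⟩ ⟨hb1, hb2⟩
    constructor <;> simp only [Prod.fst_add, Prod.snd_add, inner_add_right] <;> linarith
  smul_mem' := by
    rintro r a ⟨ha1, ha2⟩
    refine ⟨?_, ?_⟩
    · simp only [Prod.smul_snd, real_inner_smul_right, ha1, mul_zero]
    · simp only [Prod.smul_fst, Prod.smul_snd, real_inner_smul_right]
      rw [← mul_add, ha2, mul_zero]

theorem stmt9 {n : ℕ} (hn : 2 ≤ n) (x ξ : E n) (hξ : ‖ξ‖ = 1) (hxξ : ⟪x, ξ⟫_ℝ = 0) :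
    (∑ i, ξ i • Xvec i x ξ = 0 ∧ ∑ i, ξ i • Ξvec i x ξ = 0) ∧
    ((Submodule.span ℝ
        (Set.range (fun i => Xvec i x ξ) ∪ Set.range (fun i => Ξvec i x ξ)) : Set (E n × E n)) =
      {p : E n × E n | ⟪ξ, p.2⟫_ℝ = 0 ∧ ⟪ξ, p.1⟫_ℝ + ⟪x, p.2⟫_ℝ = 0}) ∧
    (∀ α β : Fin n → ℝ,
      (∑ i, α i • Xvec i x ξ) + (∑ i, β i • Ξvec i x ξ) = 0 →
      ∃ α₀ β₀ : ℝ, (∀ i, α i = α₀ * ξ i) ∧ (∀ i, β i = β₀ * ξ i)) := by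
  have hS : ∑ i, ξ i * ξ i = 1 := by
    have := real_inner_self_eq_norm_sq ξ
    rw [hξ, inner_eq_sum] at this
    simpa using this
  have hxS : ∑ i, x i * ξ i = 0 := by rw [← inner_eq_sum]; exact hxξ
  refine ⟨⟨?_, ?_⟩, ?_, ?_⟩
  · refine Prod.ext ?_ ?_
    · ext j
      rw [X_fst ξ x ξ j, hS]
      simp
    · rw [X_snd]; rfl
  · refine Prod.ext ?_ ?_
    · ext j
      rw [Ξ_fst ξ x ξ j]
      have : ∑ i, ξ i * x i = 0 := by rw [← hxS]; exact Finset.sum_congr rfl fun i _ => mul_comm _ _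
      simp [this]
    · ext j
      rw [Ξ_snd ξ x ξ j, hS]
      simp
  · -- span = Wsub
    have hspan : Submodule.span ℝ
        (Set.range (fun i => Xvec i x ξ) ∪ Set.range (fun i => Ξvec i x ξ)) = Wsub x ξ := by
      apply le_antisymm
      · rw [Submodule.span_le]
        rintro p (⟨i, rfl⟩ | ⟨i, rfl⟩)
        · refine ⟨by simp [Xvec], ?_⟩
          simp only [Xvec, inner_zero_right, add_zero, inner_sub_right,
            real_inner_smul_right]
          rw [real_inner_self_eq_norm_sq, hξ, inner_eq_sum]
          simp [EuclideanSpace.single_apply]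
        · constructor
          · simp only [Ξvec, inner_sub_right, real_inner_smul_right]
            rw [real_inner_self_eq_norm_sq, hξ, inner_eq_sum]
            simp [EuclideanSpace.single_apply]
          · simp only [Ξvec, real_inner_smul_right, inner_sub_right]
            have h1 : ⟪ξ, ξ⟫_ℝ = 1 := by
              rw [real_inner_self_eq_norm_sq, hξ]; norm_num
            have h2 : ⟪x, (EuclideanSpace.single i 1 : E n)⟫_ℝ = x i := by
              rw [inner_eq_sum]; simp [EuclideanSpace.single_apply]
            rw [h1, h2, hxξ]; ring
      · intro p hp
        obtain ⟨h1, h2⟩ := hp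
        have hrepr : p = (∑ i, p.1 i • Xvec i x ξ) + (∑ i, p.2 i • Ξvec i x ξ) := by
          refine Prod.ext ?_ ?_
          · ext j
            rw [Prod.fst_add]
            show p.1 j = (∑ i, p.1 i • Xvec i x ξ).1 j + (∑ i, p.2 i • Ξvec i x ξ).1 j
            rw [X_fst, Ξ_fst]
            simp only [inner_eq_sum] at h1 h2
            have e1 : ∑ i, p.1 i * ξ i = ∑ i, ξ i * p.1 i :=
              Finset.sum_congr rfl fun i _ => mul_comm _ _
            have e2 : ∑ i, p.2 i * x i = ∑ i, x i * p.2 i :=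
              Finset.sum_congr rfl fun i _ => mul_comm _ _
            rw [e1, e2]
            have h3 : (∑ i, ξ i * p.1 i) * ξ j + (∑ i, x i * p.2 i) * ξ j = 0 := by
              have := congrArg (· * ξ j) h2
              simpa [add_mul] using this
            linarith [h3]
          · ext j
            rw [Prod.snd_add]
            show p.2 j = (∑ i, p.1 i • Xvec i x ξ).2 j + (∑ i, p.2 i • Ξvec i x ξ).2 j
            rw [X_snd, Ξ_snd]
            rw [inner_eq_sum] at h1
            have e1 : ∑ i, p.2 i * ξ i = ∑ i, ξ i * p.2 i :=
              Finset.sum_congr rfl fun i _ => mul_comm _ _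
            rw [e1, h1]
            simp [PiLp.zero_apply]
        rw [hrepr]
        apply Submodule.add_mem
        · exact Submodule.sum_mem _ fun i _ => Submodule.smul_mem _ _
            (Submodule.subset_span (Set.mem_union_left _ ⟨i, rfl⟩))
        · exact Submodule.sum_mem _ fun i _ => Submodule.smul_mem _ _
            (Submodule.subset_span (Set.mem_union_right _ ⟨i, rfl⟩))
    rw [hspan]
    rfl
  · intro α β h
    have hfst : ∀ j, α j - (∑ i, α i * ξ i) * ξ j + (-(∑ i, β i * x i) * ξ j) = 0 := by
      intro j
      have := congrArg (fun p => p.1 j) h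
      simpa [Prod.fst_add, X_fst, Ξ_fst] using this
    have hsnd : ∀ j, β j - (∑ i, β i * ξ i) * ξ j = 0 := by
      intro j
      have := congrArg (fun p => p.2 j) h
      simpa [Prod.snd_add, X_snd, Ξ_snd] using this
    refine ⟨(∑ i, α i * ξ i) + (∑ i, β i * x i), ∑ i, β i * ξ i, fun j => ?_, fun j => ?_⟩
    · have := hfst j; nlinarith [this]
    · have := hsnd j; linarith [this]
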